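/- Let X, Y, Z̃ be independent standard Gaussians, 0 ≤ α < 1/2, η > 0, and let X̃₁ = αZ̃ + √(1-α²)Y, X̃₂ = αX̃₁ + √(1-α²)X. Then E[X · 1{-η < X̃₂ < η, -η < X̃₁ < η, Z̃ ≥ η}] ≤ 0, and |E[X · 1{-η < X̃₂ < η, -η < X̃₁ < η, Z̃ ≥ η}]| ≤ C(η) α² for some constant C(η) depending only on η. -/

import Mathlib

open MeasureTheory ProbabilityTheory Real Set
open scoped ENNReal NNReal


noncomputable def gPhi (t : ℝ) : ℝ := (Real.sqrt (2 * π))⁻¹ * Real.exp (-t ^ 2 / 2)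

lemma gPhi_pos (t : ℝ) : 0 < gPhi t := by
  have h2 : (0:ℝ) < Real.sqrt (2 * π) := Real.sqrt_pos.2 (by positivity)
  exact mul_pos (inv_pos.2 h2) (Real.exp_pos _)

lemma gPhi_cont : Continuous gPhi := by
  unfold gPhi; fun_prop

lemma gPhi_even (t : ℝ) : gPhi (-t) = gPhi t := by simp [gPhi]

lemma sqrt_two_pi_ge_two : (2:ℝ) ≤ Real.sqrt (2 * π) := by
  have h4 : (4:ℝ) ≤ 2 * π := by nlinarith [Real.pi_gt_three]
  calc (2:ℝ) = Real.sqrt 4 := by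
        rw [show (4:ℝ) = 2^2 by norm_num, Real.sqrt_sq (by norm_num)]
    _ ≤ Real.sqrt (2 * π) := Real.sqrt_le_sqrt h4

lemma hasDerivAt_neg_gPhi (t : ℝ) : HasDerivAt (fun t => -gPhi t) (t * gPhi t) t := by
  have h1 : HasDerivAt (fun t : ℝ => -t ^ 2 / 2) (-t) t := by
    have := ((hasDerivAt_pow 2 t).neg.div_const 2)
    exact this.congr_deriv (by norm_num; ring)
  have h2 := (h1.exp.const_mul ((Real.sqrt (2 * π))⁻¹)).neg
  exact h2.congr_deriv (by unfold gPhi; ring)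

lemma gPhi_le {a b : ℝ} (h : |a| ≤ |b|) : gPhi b ≤ gPhi a := by
  have : -b ^ 2 / 2 ≤ -a ^ 2 / 2 := by
    nlinarith [sq_abs a, sq_abs b, abs_nonneg a, pow_le_pow_left₀ (abs_nonneg a) h 2]
  exact mul_le_mul_of_nonneg_left (Real.exp_le_exp.2 this) (by positivity)

lemma abs_mul_exp_le (t : ℝ) : |t| * Real.exp (-t ^ 2 / 2) ≤ 2 := by
  rcases le_or_gt (|t|) 1 with h | h
  · have : Real.exp (-t ^ 2 / 2) ≤ 1 := Real.exp_le_one_iff.2 (by nlinarith [sq_nonneg t])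
    nlinarith [Real.exp_pos (-t^2/2)]
  · have h1 : t ^ 2 / 2 ≤ Real.exp (t ^ 2 / 2) := by
      have := Real.add_one_le_exp (t ^ 2 / 2)
      nlinarith
    have h2 : Real.exp (-t ^ 2 / 2) ≤ (t ^ 2 / 2)⁻¹ := by
      rw [show -t^2/2 = -(t^2/2) by ring, Real.exp_neg]
      exact inv_anti₀ (by nlinarith [sq_abs t]) h1
    have ht2 : (0:ℝ) < t ^ 2 := by nlinarith [sq_abs t]
    calc |t| * Real.exp (-t ^ 2 / 2) ≤ |t| * (t ^ 2 / 2)⁻¹ :=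
          mul_le_mul_of_nonneg_left h2 (abs_nonneg t)
      _ = 2 / |t| := by
          rw [eq_div_iff (by positivity)]
          field_simp
          rw [sq_abs, div_self ht2.ne']
      _ ≤ 2 := by
          rw [div_le_iff₀ (by positivity)]
          nlinarith

lemma gPhi_lip (a b : ℝ) : |gPhi a - gPhi b| ≤ |a - b| := by
  have hderiv : ∀ x : ℝ, HasDerivAt gPhi (-(x * gPhi x)) x := by
    intro x
    simpa [Pi.neg_def] using (hasDerivAt_neg_gPhi x).neg
  have hbound : ∀ x ∈ (univ : Set ℝ), ‖-(x * gPhi x)‖ ≤ 1 := by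
    intro x _
    rw [norm_neg, Real.norm_eq_abs, abs_mul]
    have h1 : |gPhi x| = (Real.sqrt (2 * π))⁻¹ * Real.exp (-x ^ 2 / 2) := by
      rw [abs_of_pos (gPhi_pos x)]; rfl
    rw [h1]
    have h2 := abs_mul_exp_le x
    have h3 : (Real.sqrt (2 * π))⁻¹ ≤ 1/2 := by
      rw [inv_le_comm₀ (lt_of_lt_of_le (by norm_num) sqrt_two_pi_ge_two) (by norm_num)]
      simpa using sqrt_two_pi_ge_two
    have h4 : (0:ℝ) < Real.sqrt (2*π) := lt_of_lt_of_le (by norm_num) sqrt_two_pi_ge_two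
    calc |x| * ((Real.sqrt (2 * π))⁻¹ * Real.exp (-x ^ 2 / 2))
        = (Real.sqrt (2 * π))⁻¹ * (|x| * Real.exp (-x ^ 2 / 2)) := by ring
      _ ≤ (1/2) * 2 := by
          apply mul_le_mul h3 h2 (by positivity) (by norm_num)
      _ = 1 := by norm_num
  have := (convex_univ (𝕜 := ℝ) (E := ℝ)).norm_image_sub_le_of_norm_hasDerivWithin_le
    (f := gPhi) (f' := fun x => -(x * gPhi x)) (C := 1)
    (fun x _ => (hderiv x).hasDerivWithinAt) hbound (mem_univ b) (mem_univ a)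
  simpa [Real.norm_eq_abs] using this

lemma intervalIntegral_x_gPhi (a b : ℝ) : ∫ x in a..b, x * gPhi x = gPhi a - gPhi b := by
  rw [intervalIntegral.integral_eq_sub_of_hasDerivAt
    (fun x _ => hasDerivAt_neg_gPhi x)
    (Continuous.intervalIntegrable (continuous_id.mul gPhi_cont) a b)]
  ring

lemma gaussianPDFReal_eq_gPhi : gaussianPDFReal 0 1 = gPhi := by
  funext x
  simp [gaussianPDFReal_def, gPhi]

lemma gaussianPDF_eq_gPhi : gaussianPDF 0 1 = fun x => ((Real.toNNReal (gPhi x) : ℝ≥0∞)) := by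
  funext x
  rw [gaussianPDF, gaussianPDFReal_eq_gPhi]
  rfl


lemma gPhi_toNNReal_smul (x r : ℝ) : (gPhi x).toNNReal • r = gPhi x * r := by
  rw [NNReal.smul_def, Real.coe_toNNReal _ (gPhi_pos x).le, smul_eq_mul]

lemma gauss_int (g : ℝ → ℝ) : ∫ x, g x ∂(gaussianReal 0 1) = ∫ x, gPhi x * g x := by
  rw [gaussianReal_of_var_ne_zero _ one_ne_zero, gaussianPDF_eq_gPhi,
    integral_withDensity_eq_integral_smul (gPhi_cont.measurable.real_toNNReal) g]
  congr 1
  funext x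
  rw [NNReal.smul_def, Real.coe_toNNReal _ (gPhi_pos x).le, smul_eq_mul]

lemma gauss_setint (g : ℝ → ℝ) {s : Set ℝ} (hs : MeasurableSet s) :
    ∫ x in s, g x ∂(gaussianReal 0 1) = ∫ x in s, gPhi x * g x := by
  rw [gaussianReal_of_var_ne_zero _ one_ne_zero, gaussianPDF_eq_gPhi,
    setIntegral_withDensity_eq_setIntegral_smul (gPhi_cont.measurable.real_toNNReal) g hs]
  apply setIntegral_congr_fun hs
  intro x _
  exact gPhi_toNNReal_smul x (g x)

lemma gauss_integrable_iff (g : ℝ → ℝ) :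
    Integrable g (gaussianReal 0 1) ↔ Integrable (fun x => gPhi x * g x) volume := by
  rw [gaussianReal_of_var_ne_zero _ one_ne_zero, gaussianPDF_eq_gPhi,
    integrable_withDensity_iff_integrable_smul (gPhi_cont.measurable.real_toNNReal)]
  constructor <;> intro h <;> refine h.congr (Filter.Eventually.of_forall fun x => ?_)
  · exact gPhi_toNNReal_smul x (g x)
  · exact (gPhi_toNNReal_smul x (g x)).symm

lemma integrable_id_gauss : Integrable (fun x => x) (gaussianReal 0 1) := by
  rw [gauss_integrable_iff]
  have h := (integrable_mul_exp_neg_mul_sq (b := 1/2) (by norm_num)).const_mul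
    ((Real.sqrt (2 * π))⁻¹)
  refine h.congr (Filter.Eventually.of_forall fun x => ?_)
  show (Real.sqrt (2 * π))⁻¹ * (x * Real.exp (-(1/2) * x ^ 2)) = gPhi x * x
  unfold gPhi
  rw [show -(1/2 : ℝ) * x ^ 2 = -x ^ 2 / 2 by ring]
  ring

lemma integrable_max_gauss : Integrable (fun x => max x 0) (gaussianReal 0 1) := by
  refine integrable_id_gauss.abs.mono' ?_ (Filter.Eventually.of_forall fun x => ?_)
  · exact (continuous_id.max continuous_const).aestronglyMeasurable
  · rw [Real.norm_eq_abs, abs_of_nonneg (le_max_right x 0)]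
    exact max_le (le_abs_self x) (abs_nonneg x)

lemma gauss_moment_Ioo {a b : ℝ} (hab : a ≤ b) :
    ∫ x in Ioo a b, x ∂(gaussianReal 0 1) = gPhi a - gPhi b := by
  rw [gauss_setint _ measurableSet_Ioo, ← integral_Ioc_eq_integral_Ioo,
    ← intervalIntegral.integral_of_le hab]
  rw [← intervalIntegral_x_gPhi a b]
  apply intervalIntegral.integral_congr
  intro x _
  exact mul_comm _ _

noncomputable def sA (α : ℝ) : ℝ := Real.sqrt (1 - α ^ 2)
noncomputable def gG (η α u : ℝ) : ℝ := gPhi ((-η - α*u)/sA α) - gPhi ((η - α*u)/sA α)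
noncomputable def fD (α z u : ℝ) : ℝ := (sA α)⁻¹ * gPhi ((u - α*z)/sA α)

section facts
variable {η α : ℝ} (hη : 0 < η) (hα0 : 0 ≤ α) (hα : α < 1/2)
include hα0 hα

lemma one_sub_sq_pos : 0 < 1 - α ^ 2 := by nlinarith

lemma sA_pos : 0 < sA α := Real.sqrt_pos.2 (one_sub_sq_pos hα0 hα)

lemma sA_sq : sA α ^ 2 = 1 - α ^ 2 := Real.sq_sqrt (one_sub_sq_pos hα0 hα).le

lemma sA_half : 1/2 ≤ sA α := by
  have h1 : (1/2 : ℝ) = Real.sqrt (1/4) := by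
    rw [show (1/4 : ℝ) = (1/2)^2 by norm_num, Real.sqrt_sq (by norm_num)]
  rw [h1]
  exact Real.sqrt_le_sqrt (by nlinarith)

lemma inv_sA_le_two : (sA α)⁻¹ ≤ 2 := by
  rw [inv_le_comm₀ (sA_pos hα0 hα) (by norm_num)]
  simpa using sA_half hα0 hα

omit hα0 hα in
lemma gG_eq (u : ℝ) : gG η α u = gPhi ((η + α*u)/sA α) - gPhi ((η - α*u)/sA α) := by
  unfold gG
  rw [show (-η - α*u)/sA α = -((η + α*u)/sA α) by ring, gPhi_even]

omit hα0 hα in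
lemma gG_odd (u : ℝ) : gG η α (-u) = -(gG η α u) := by
  unfold gG
  rw [show (-η - α*(-u))/sA α = -((η - α*u)/sA α) by ring,
    show (η - α*(-u))/sA α = -((-η - α*u)/sA α) by ring, gPhi_even, gPhi_even]
  ring

include hη in
lemma gG_nonpos {u : ℝ} (hu0 : 0 ≤ u) (huη : u ≤ η) : gG η α u ≤ 0 := by
  rw [gG_eq]
  have hs := sA_pos hα0 hα
  have h2 : |(η - α*u)/sA α| ≤ |(η + α*u)/sA α| := by
    rw [abs_div, abs_div, abs_of_pos hs,
      abs_of_nonneg (by nlinarith : (0:ℝ) ≤ η - α*u),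
      abs_of_nonneg (by nlinarith : (0:ℝ) ≤ η + α*u)]
    gcongr
    nlinarith
  linarith [gPhi_le h2]

omit hη in
lemma neg_gG_le {u : ℝ} (hu0 : 0 ≤ u) : -(gG η α u) ≤ 4 * α * u := by
  rw [gG_eq]
  have hs := sA_pos hα0 hα
  have h1 : gPhi ((η - α*u)/sA α) - gPhi ((η + α*u)/sA α) ≤ |(η - α*u)/sA α - (η + α*u)/sA α| :=
    (le_abs_self _).trans (gPhi_lip _ _)
  have h2 : |(η - α*u)/sA α - (η + α*u)/sA α| = 2*α*u/sA α := by
    rw [show (η - α*u)/sA α - (η + α*u)/sA α = -(2*α*u/sA α) by ring, abs_neg,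
      abs_of_nonneg (by positivity)]
  have h3 : 2*α*u/sA α ≤ 4*α*u := by
    rw [div_eq_mul_inv]
    calc 2*α*u * (sA α)⁻¹ ≤ 2*α*u * 2 :=
          mul_le_mul_of_nonneg_left (inv_sA_le_two hα0 hα) (by positivity)
      _ = 4*α*u := by ring
  linarith

lemma gPhi_pair_le {z u : ℝ} (hz : 0 ≤ z) (hu0 : 0 ≤ u) :
    gPhi ((u + α*z)/sA α) ≤ gPhi ((u - α*z)/sA α) := by
  have hs := sA_pos hα0 hα
  have hm : 0 ≤ α * z := by positivity
  apply gPhi_le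
  rw [abs_div, abs_div, abs_of_pos hs, abs_of_nonneg (by linarith : (0:ℝ) ≤ u + α*z)]
  gcongr
  exact abs_le.2 ⟨by linarith, by linarith⟩

lemma fD_diff_nonneg {z u : ℝ} (hz : 0 ≤ z) (hu0 : 0 ≤ u) : 0 ≤ fD α z u - fD α z (-u) := by
  unfold fD
  have hs := sA_pos hα0 hα
  rw [show (-u - α*z)/sA α = -((u + α*z)/sA α) by ring, gPhi_even]
  have h := mul_nonneg (inv_pos.2 hs).le (sub_nonneg.2 (gPhi_pair_le hα0 hα hz hu0))
  linarith

lemma fD_diff_le {z u : ℝ} (hz : 0 ≤ z) (hu0 : 0 ≤ u) : fD α z u - fD α z (-u) ≤ 8 * α * z := by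
  unfold fD
  have hs := sA_pos hα0 hα
  have hsi := inv_sA_le_two hα0 hα
  rw [show (-u - α*z)/sA α = -((u + α*z)/sA α) by ring, gPhi_even]
  have h1 : gPhi ((u - α*z)/sA α) - gPhi ((u + α*z)/sA α) ≤ 2*α*z/sA α := by
    refine ((le_abs_self _).trans (gPhi_lip _ _)).trans ?_
    rw [show (u - α*z)/sA α - (u + α*z)/sA α = -(2*α*z/sA α) by ring, abs_neg,
      abs_of_nonneg (by positivity)]
  have h2 : 2*α*z/sA α ≤ 4*α*z := by
    rw [div_eq_mul_inv]
    calc 2*α*z * (sA α)⁻¹ ≤ 2*α*z * 2 :=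
          mul_le_mul_of_nonneg_left hsi (by positivity)
      _ = 4*α*z := by ring
  calc (sA α)⁻¹ * gPhi ((u - α*z)/sA α) - (sA α)⁻¹ * gPhi ((u + α*z)/sA α)
      = (sA α)⁻¹ * (gPhi ((u - α*z)/sA α) - gPhi ((u + α*z)/sA α)) := by ring
    _ ≤ 2 * (4*α*z) := by
        apply mul_le_mul hsi (by linarith) _ (by norm_num)
        exact sub_nonneg.2 (gPhi_pair_le hα0 hα hz hu0)
    _ = 8*α*z := by ring

end facts

lemma fD_cont (α z : ℝ) : Continuous (fD α z) := by
  unfold fD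
  exact continuous_const.mul (gPhi_cont.comp (by fun_prop))

lemma gG_cont (η α : ℝ) : Continuous (gG η α) := by
  unfold gG
  exact (gPhi_cont.comp (by fun_prop)).sub (gPhi_cont.comp (by fun_prop))

lemma middle_bound {η α : ℝ} (hη : 0 < η) (hα0 : 0 ≤ α) (hα : α < 1/2) {z : ℝ} (hz : η ≤ z) :
    (∫ u in Ioo (-η) η, gG η α u * fD α z u) ≤ 0 ∧
    -(∫ u in Ioo (-η) η, gG η α u * fD α z u) ≤ 16 * η^2 * α^2 * z := by
  have hz0 : 0 ≤ z := le_trans hη.le hz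
  set G : ℝ → ℝ := fun u => gG η α u * fD α z u with hG
  have hGc : Continuous G := (gG_cont η α).mul (fD_cont α z)
  have hsplit : (∫ u in Ioo (-η) η, G u) = ∫ u in (0:ℝ)..η, (G (-u) + G u) := by
    rw [← integral_Ioc_eq_integral_Ioo, ← intervalIntegral.integral_of_le (by linarith)]
    rw [← intervalIntegral.integral_add_adjacent_intervals
      (hGc.intervalIntegrable (-η) 0) (hGc.intervalIntegrable 0 η)]
    have hneg : (∫ u in (0:ℝ)..η, G (-u)) = ∫ x in (-η)..(0:ℝ), G x := by
      rw [intervalIntegral.integral_comp_neg]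
      norm_num
    rw [← hneg]
    exact (intervalIntegral.integral_add ((hGc.comp continuous_neg).intervalIntegrable 0 η)
      (hGc.intervalIntegrable 0 η)).symm
  have hpt : ∀ u, G (-u) + G u = gG η α u * (fD α z u - fD α z (-u)) := by
    intro u
    rw [hG]
    simp only []
    rw [gG_odd]
    ring
  have hbound : ∀ u ∈ Icc (0:ℝ) η, G (-u) + G u ≤ 0 ∧
      -(G (-u) + G u) ≤ 32 * α^2 * z * u := by
    intro u hu
    rw [hpt u]
    constructor
    · exact mul_nonpos_of_nonpos_of_nonneg (gG_nonpos hη hα0 hα hu.1 hu.2)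
        (fD_diff_nonneg hα0 hα hz0 hu.1)
    · rw [show -(gG η α u * (fD α z u - fD α z (-u)))
        = (-(gG η α u)) * (fD α z u - fD α z (-u)) by ring]
      calc (-(gG η α u)) * (fD α z u - fD α z (-u)) ≤ (4*α*u) * (8*α*z) := by
            apply mul_le_mul (neg_gG_le hα0 hα hu.1) (fD_diff_le hα0 hα hz0 hu.1)
              (fD_diff_nonneg hα0 hα hz0 hu.1) (mul_nonneg (by linarith) hu.1)
        _ = 32 * α^2 * z * u := by ring
  rw [hsplit]
  have hPc : Continuous (fun u => G (-u) + G u) := (hGc.comp continuous_neg).add hGc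
  constructor
  · calc (∫ u in (0:ℝ)..η, (G (-u) + G u)) ≤ ∫ u in (0:ℝ)..η, (0:ℝ) :=
        intervalIntegral.integral_mono_on hη.le (hPc.intervalIntegrable 0 η)
          intervalIntegrable_const (fun u hu => (hbound u hu).1)
      _ = 0 := by simp
  · rw [← intervalIntegral.integral_neg]
    calc (∫ u in (0:ℝ)..η, -(G (-u) + G u)) ≤ ∫ u in (0:ℝ)..η, 32 * α^2 * z * u :=
        intervalIntegral.integral_mono_on hη.le (hPc.neg.intervalIntegrable 0 η)
          ((continuous_const.mul continuous_id).intervalIntegrable 0 η)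
          (fun u hu => (hbound u hu).2)
      _ = 32 * α^2 * z * (η^2/2) := by
        rw [intervalIntegral.integral_const_mul, integral_id]
        ring
      _ = 16 * η^2 * α^2 * z := by ring

lemma ylevel {η α : ℝ} (hα0 : 0 ≤ α) (hα : α < 1/2) (z : ℝ) :
    (∫ y, (Ioo (-η) η).indicator (gG η α) (α*z + sA α * y) ∂(gaussianReal 0 1))
      = ∫ u in Ioo (-η) η, gG η α u * fD α z u := by
  have hs := sA_pos hα0 hα
  set h : ℝ → ℝ := (Ioo (-η) η).indicator (gG η α) with hh
  set W : ℝ → ℝ := fun u => fD α z u * h u with hW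
  have claim1 : (∫ u, W u ∂volume) = ∫ u in Ioo (-η) η, gG η α u * fD α z u := by
    rw [← integral_indicator measurableSet_Ioo]
    congr 1
    funext u
    by_cases hu : u ∈ Ioo (-η) η
    · rw [hW]
      simp only []
      rw [hh, indicator_of_mem hu, indicator_of_mem hu]
      ring
    · rw [hW]
      simp only []
      rw [hh, indicator_of_notMem hu, indicator_of_notMem hu, mul_zero]
  have e1 : ∀ y, gPhi y * h (α*z + sA α * y) = sA α * W (α*z + sA α * y) := by
    intro y
    rw [hW]
    simp only []
    unfold fD
    rw [show (α*z + sA α*y - α*z)/sA α = y by field_simp; ring]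
    field_simp
  have claim2 : (∫ y, gPhi y * h (α*z + sA α * y) ∂volume) = ∫ u, W u ∂volume := by
    calc (∫ y, gPhi y * h (α*z + sA α * y) ∂volume)
        = ∫ y, sA α * W (α*z + sA α * y) ∂volume := by
          congr 1; funext y; exact e1 y
      _ = sA α * ∫ y, W (α*z + sA α * y) ∂volume := by rw [MeasureTheory.integral_const_mul]
      _ = sA α * (|((sA α))⁻¹| • ∫ x, W (α*z + x) ∂volume) := by
          rw [Measure.integral_comp_mul_left (fun x => W (α*z + x)) (sA α)]
      _ = sA α * ((sA α)⁻¹ * ∫ u, W u ∂volume) := by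
          rw [integral_add_left_eq_self W (α*z), abs_of_pos (inv_pos.2 hs), smul_eq_mul]
      _ = ∫ u, W u ∂volume := by
          field_simp
  rw [gauss_int (fun y => h (α*z + sA α * y)), claim2, claim1]

def AS (η α : ℝ) : Set (ℝ × ℝ × ℝ) :=
  {p | (-η < α*(α*p.1 + sA α*p.2.1) + sA α*p.2.2 ∧
        α*(α*p.1 + sA α*p.2.1) + sA α*p.2.2 < η) ∧
       (-η < α*p.1 + sA α*p.2.1 ∧ α*p.1 + sA α*p.2.1 < η) ∧ η ≤ p.1}

lemma AS_measurable (η α : ℝ) : MeasurableSet (AS η α) := by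
  have h1 : Measurable (fun p : ℝ×ℝ×ℝ => α*(α*p.1 + sA α*p.2.1) + sA α*p.2.2) := by fun_prop
  have h2 : Measurable (fun p : ℝ×ℝ×ℝ => α*p.1 + sA α*p.2.1) := by fun_prop
  exact ((measurableSet_lt measurable_const h1).inter
      (measurableSet_lt h1 measurable_const)).inter
    (((measurableSet_lt measurable_const h2).inter
      (measurableSet_lt h2 measurable_const)).inter
     (measurableSet_le measurable_const measurable_fst))

lemma xlevel {η α : ℝ} (hη : 0 < η) (hα0 : 0 ≤ α) (hα : α < 1/2) (z y : ℝ) :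
    (∫ x, (AS η α).indicator (fun p => p.2.2) (z, (y, x)) ∂(gaussianReal 0 1))
      = (Ici η).indicator
          (fun z' => (Ioo (-η) η).indicator (gG η α) (α*z' + sA α * y)) z := by
  have hs := sA_pos hα0 hα
  set u : ℝ := α*z + sA α * y with hu
  by_cases hc : (-η < u ∧ u < η) ∧ η ≤ z
  · set l : ℝ := (-η - α*u)/sA α with hl
    set r : ℝ := (η - α*u)/sA α with hr
    have hmem : ∀ x : ℝ, (z, (y, x)) ∈ AS η α ↔ x ∈ Ioo l r := by
      intro x
      unfold AS
      simp only [mem_setOf_eq, mem_Ioo]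
      constructor
      · rintro ⟨⟨h1, h2⟩, -⟩
        rw [← hu] at h1 h2
        constructor
        · rw [hl, div_lt_iff₀ hs]; linarith
        · rw [hr, lt_div_iff₀ hs]; linarith
      · rintro ⟨h1, h2⟩
        rw [hl, div_lt_iff₀ hs] at h1
        rw [hr, lt_div_iff₀ hs] at h2
        refine ⟨⟨?_, ?_⟩, hc.1, hc.2⟩ <;> rw [← hu] <;> linarith
    have hpt : ∀ x : ℝ, (AS η α).indicator (fun p : ℝ × ℝ × ℝ => p.2.2) (z, (y, x))
        = (Ioo l r).indicator id x := by
      intro x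
      by_cases hx : x ∈ Ioo l r
      · rw [indicator_of_mem ((hmem x).2 hx), indicator_of_mem hx]; rfl
      · rw [indicator_of_notMem (fun hmm => hx ((hmem x).1 hmm)), indicator_of_notMem hx]
    have hlr : l ≤ r := by
      rw [hl, hr]
      gcongr
      all_goals linarith [hs]
    calc (∫ x, (AS η α).indicator (fun p : ℝ × ℝ × ℝ => p.2.2) (z, (y, x)) ∂(gaussianReal 0 1))
        = ∫ x, (Ioo l r).indicator id x ∂(gaussianReal 0 1) := by
          congr 1; funext x; exact hpt x
      _ = ∫ x in Ioo l r, x ∂(gaussianReal 0 1) := integral_indicator measurableSet_Ioo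
      _ = gPhi l - gPhi r := gauss_moment_Ioo hlr
      _ = gG η α u := rfl
      _ = (Ici η).indicator (fun z' => (Ioo (-η) η).indicator (gG η α) (α*z' + sA α * y)) z := by
          rw [indicator_of_mem (mem_Ici.2 hc.2), indicator_of_mem (mem_Ioo.2 hc.1)]
  · have hpt : ∀ x : ℝ, (AS η α).indicator (fun p : ℝ × ℝ × ℝ => p.2.2) (z, (y, x)) = 0 := by
      intro x
      apply indicator_of_notMem
      intro hmm
      exact hc ⟨hmm.2.1, hmm.2.2⟩
    have hrhs : (Ici η).indicator
        (fun z' => (Ioo (-η) η).indicator (gG η α) (α*z' + sA α * y)) z = 0 := by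
      by_cases hz : η ≤ z
      · rw [indicator_of_mem (mem_Ici.2 hz)]
        apply indicator_of_notMem
        intro hmm
        exact hc ⟨mem_Ioo.1 hmm, hz⟩
      · exact indicator_of_notMem (fun hmm => hz (mem_Ici.1 hmm)) _
    rw [hrhs]
    calc (∫ x, (AS η α).indicator (fun p : ℝ × ℝ × ℝ => p.2.2) (z, (y, x)) ∂(gaussianReal 0 1))
        = ∫ x, (0:ℝ) ∂(gaussianReal 0 1) := by congr 1; funext x; exact hpt x
      _ = 0 := integral_zero _ _

lemma map_snd_snd :
    Measure.map (fun p : ℝ×ℝ×ℝ => p.2.2)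
      ((gaussianReal 0 1).prod ((gaussianReal 0 1).prod (gaussianReal 0 1))) = gaussianReal 0 1 := by
  have h : (fun p : ℝ×ℝ×ℝ => p.2.2) = (Prod.snd ∘ Prod.snd) := rfl
  rw [h, ← Measure.map_map measurable_snd measurable_snd]
  simp [Measure.map_snd_prod, measure_univ]

lemma integrable_snd_snd :
    Integrable (fun p : ℝ×ℝ×ℝ => p.2.2)
      ((gaussianReal 0 1).prod ((gaussianReal 0 1).prod (gaussianReal 0 1))) := by
  have h := (integrable_map_measure (f := fun p : ℝ×ℝ×ℝ => p.2.2) (g := id)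
    aestronglyMeasurable_id (measurable_snd.comp measurable_snd).aemeasurable).mp
    (by rw [map_snd_snd]; exact integrable_id_gauss)
  exact h

lemma integrable_snd2 :
    Integrable (fun q : ℝ×ℝ => q.2) ((gaussianReal 0 1).prod (gaussianReal 0 1)) := by
  have hmap : Measure.map (fun q : ℝ×ℝ => q.2)
      ((gaussianReal 0 1).prod (gaussianReal 0 1)) = gaussianReal 0 1 := by
    rw [show (fun q : ℝ×ℝ => q.2) = Prod.snd from rfl, Measure.map_snd_prod]
    simp
  have h := (integrable_map_measure (f := fun q : ℝ×ℝ => q.2) (g := id)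
    aestronglyMeasurable_id measurable_snd.aemeasurable).mp
    (by rw [hmap]; exact integrable_id_gauss)
  exact h

lemma gauss_side {η α : ℝ} (hη : 0 < η) (hα0 : 0 ≤ α) (hα : α < 1/2) :
    (∫ p, (AS η α).indicator (fun p : ℝ×ℝ×ℝ => p.2.2) p
        ∂((gaussianReal 0 1).prod ((gaussianReal 0 1).prod (gaussianReal 0 1)))) ≤ 0 ∧
    -(∫ p, (AS η α).indicator (fun p : ℝ×ℝ×ℝ => p.2.2) p
        ∂((gaussianReal 0 1).prod ((gaussianReal 0 1).prod (gaussianReal 0 1)))) ≤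
      (16 * η^2 * ∫ z, max z 0 ∂(gaussianReal 0 1)) * α^2 := by
  set γ : Measure ℝ := gaussianReal 0 1 with hγ
  set F : ℝ×ℝ×ℝ → ℝ := (AS η α).indicator (fun p : ℝ×ℝ×ℝ => p.2.2) with hF
  set J : ℝ → ℝ := fun z => ∫ u in Ioo (-η) η, gG η α u * fD α z u with hJ
  have hFm : Measurable F := (measurable_snd.comp measurable_snd).indicator (AS_measurable η α)
  have hFbound : ∀ p : ℝ×ℝ×ℝ, ‖F p‖ ≤ |p.2.2| := by
    intro p
    rw [hF]
    exact (norm_indicator_le_norm_self _ _).trans (le_refl _)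
  have hFint : Integrable F (γ.prod (γ.prod γ)) :=
    integrable_snd_snd.abs.mono' hFm.aestronglyMeasurable (Filter.Eventually.of_forall hFbound)
  have step1 : (∫ p, F p ∂(γ.prod (γ.prod γ)))
      = ∫ z, (∫ q, F (z, q) ∂(γ.prod γ)) ∂γ := integral_prod F hFint
  have inner : ∀ z, (∫ q, F (z, q) ∂(γ.prod γ)) = (Ici η).indicator J z := by
    intro z
    have hFz : Integrable (fun q : ℝ×ℝ => F (z, q)) (γ.prod γ) := by
      refine integrable_snd2.abs.mono'
        ((hFm.comp (measurable_prodMk_left)).aestronglyMeasurable)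
        (Filter.Eventually.of_forall fun q => ?_)
      exact hFbound (z, q)
    rw [integral_prod _ hFz]
    have e1 : ∀ y : ℝ, (∫ x, F (z, (y, x)) ∂γ)
        = (Ici η).indicator
            (fun z' => (Ioo (-η) η).indicator (gG η α) (α*z' + sA α * y)) z := by
      intro y
      exact xlevel hη hα0 hα z y
    rw [show (∫ y, (∫ x, F (z, (y, x)) ∂γ) ∂γ)
        = ∫ y, (Ici η).indicator
            (fun z' => (Ioo (-η) η).indicator (gG η α) (α*z' + sA α * y)) z ∂γ from by
      congr 1; funext y; exact e1 y]
    by_cases hz : η ≤ z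
    · simp only [Set.indicator_of_mem (mem_Ici.2 hz)]
      exact ylevel hα0 hα z
    · simp only [Set.indicator_of_notMem (show z ∉ Ici η from fun h => hz h)]
      exact integral_zero _ _
  rw [step1, show (fun z => ∫ q, F (z, q) ∂(γ.prod γ)) = fun z => (Ici η).indicator J z from
    funext inner]
  have hptA : ∀ z, (Ici η).indicator J z ≤ 0 := by
    intro z
    by_cases hz : η ≤ z
    · rw [Set.indicator_of_mem (mem_Ici.2 hz)]
      exact (middle_bound hη hα0 hα hz).1
    · rw [Set.indicator_of_notMem (show z ∉ Ici η from fun h => hz h)]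
  constructor
  · exact integral_nonpos hptA
  · rw [← integral_neg]
    have hmono : (∫ z, -((Ici η).indicator J z) ∂γ)
        ≤ ∫ z, (16 * η^2 * α^2) * max z 0 ∂γ := by
      apply integral_mono_of_nonneg
      · exact Filter.Eventually.of_forall fun z => neg_nonneg.2 (hptA z)
      · exact integrable_max_gauss.const_mul _
      · refine Filter.Eventually.of_forall fun z => ?_
        show -((Ici η).indicator J z) ≤ 16 * η^2 * α^2 * max z 0
        by_cases hz : η ≤ z
        · rw [Set.indicator_of_mem (mem_Ici.2 hz)]
          have h2 := (middle_bound hη hα0 hα hz).2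
          rw [max_eq_left (by linarith : (0:ℝ) ≤ z)]
          calc -(J z) ≤ 16 * η^2 * α^2 * z := h2
            _ = 16 * η^2 * α^2 * z := rfl
        · rw [Set.indicator_of_notMem (show z ∉ Ici η from fun h => hz h), neg_zero]
          exact mul_nonneg (by positivity) (le_max_right z 0)
    refine hmono.trans ?_
    rw [MeasureTheory.integral_const_mul]
    ring_nf
    exact le_refl _

lemma mapT {Ω : Type} [MeasureSpace Ω] (μ : Measure Ω) [IsProbabilityMeasure μ]
    (X Y Z : Ω → ℝ) (hXm : Measurable X) (hYm : Measurable Y) (hZm : Measurable Z)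
    (hind : iIndepFun ![X, Y, Z] μ)
    (hX : Measure.map X μ = gaussianReal 0 1) (hY : Measure.map Y μ = gaussianReal 0 1)
    (hZ : Measure.map Z μ = gaussianReal 0 1) :
    Measure.map (fun ω => (Z ω, (Y ω, X ω))) μ
      = (gaussianReal 0 1).prod ((gaussianReal 0 1).prod (gaussianReal 0 1)) := by
  have hmeas : ∀ i, Measurable (![X, Y, Z] i) := by
    intro i
    fin_cases i
    · exact hXm
    · exact hYm
    · exact hZm
  have hYX : IndepFun Y X μ := hind.indepFun (show (1 : Fin 3) ≠ 0 by decide)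
  have hpair : IndepFun (fun ω => (Y ω, X ω)) Z μ :=
    hind.indepFun_prodMk hmeas 1 0 2 (by decide) (by decide)
  have h1 : Measure.map (fun ω => (Y ω, X ω)) μ
      = (gaussianReal 0 1).prod (gaussianReal 0 1) := by
    rw [(indepFun_iff_map_prod_eq_prod_map_map hYm.aemeasurable hXm.aemeasurable).mp hYX,
      hY, hX]
  rw [(indepFun_iff_map_prod_eq_prod_map_map hZm.aemeasurable
    (hYm.prodMk hXm).aemeasurable).mp hpair.symm, hZ, h1]

lemma transfer {η α : ℝ} {Ω : Type} [MeasureSpace Ω] (μ : Measure Ω) [IsProbabilityMeasure μ]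
    (X Y Z : Ω → ℝ) (hXm : Measurable X) (hYm : Measurable Y) (hZm : Measurable Z)
    (hind : iIndepFun ![X, Y, Z] μ)
    (hX : Measure.map X μ = gaussianReal 0 1) (hY : Measure.map Y μ = gaussianReal 0 1)
    (hZ : Measure.map Z μ = gaussianReal 0 1) :
    (∫ ω in {ω | (-η < α * (α * Z ω + sA α * Y ω) + sA α * X ω ∧
                  α * (α * Z ω + sA α * Y ω) + sA α * X ω < η) ∧
                 (-η < α * Z ω + sA α * Y ω ∧ α * Z ω + sA α * Y ω < η) ∧
                 η ≤ Z ω}, X ω ∂μ)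
      = ∫ p, (AS η α).indicator (fun p : ℝ×ℝ×ℝ => p.2.2) p
          ∂((gaussianReal 0 1).prod ((gaussianReal 0 1).prod (gaussianReal 0 1))) := by
  set T : Ω → ℝ×ℝ×ℝ := fun ω => (Z ω, (Y ω, X ω)) with hT
  have hTm : Measurable T := hZm.prodMk (hYm.prodMk hXm)
  have hS : {ω | (-η < α * (α * Z ω + sA α * Y ω) + sA α * X ω ∧
                  α * (α * Z ω + sA α * Y ω) + sA α * X ω < η) ∧
                 (-η < α * Z ω + sA α * Y ω ∧ α * Z ω + sA α * Y ω < η) ∧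
                 η ≤ Z ω} = T ⁻¹' AS η α := rfl
  rw [hS]
  calc (∫ ω in T ⁻¹' AS η α, X ω ∂μ)
      = ∫ ω, (T ⁻¹' AS η α).indicator X ω ∂μ :=
        (integral_indicator (hTm (AS_measurable η α))).symm
    _ = ∫ ω, (AS η α).indicator (fun p : ℝ×ℝ×ℝ => p.2.2) (T ω) ∂μ := by
        congr 1
    _ = ∫ p, (AS η α).indicator (fun p : ℝ×ℝ×ℝ => p.2.2) p ∂(Measure.map T μ) :=
        (integral_map hTm.aemeasurable
          (((measurable_snd.comp measurable_snd).indicator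
            (AS_measurable η α)).aestronglyMeasurable)).symm
    _ = _ := by rw [hT, mapT μ X Y Z hXm hYm hZm hind hX hY hZ]

lemma iIndepFun_congr3 {Ω : Type} [MeasureSpace Ω] {μ : Measure Ω}
    {X X' Y Y' Z Z' : Ω → ℝ} (hX : X =ᵐ[μ] X') (hY : Y =ᵐ[μ] Y') (hZ : Z =ᵐ[μ] Z')
    (h : iIndepFun ![X, Y, Z] μ) :
    iIndepFun ![X', Y', Z'] μ := by
  rw [iIndepFun_iff_measure_inter_preimage_eq_mul] at h ⊢
  intro S sets hsets
  have key : ∀ᵐ ω ∂μ, ∀ i : Fin 3,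
      (![X', Y', Z'] i ω ∈ sets i ↔ ![X, Y, Z] i ω ∈ sets i) := by
    filter_upwards [hX, hY, hZ] with ω h1 h2 h3
    intro i
    fin_cases i <;> simp [h1, h2, h3]
  have e1 : ((⋂ i ∈ S, ![X', Y', Z'] i ⁻¹' sets i : Set Ω))
      =ᵐ[μ] ((⋂ i ∈ S, ![X, Y, Z] i ⁻¹' sets i : Set Ω)) := by
    filter_upwards [key] with ω hω
    have h2 : (ω ∈ ⋂ i ∈ S, ![X', Y', Z'] i ⁻¹' sets i)
        ↔ (ω ∈ ⋂ i ∈ S, ![X, Y, Z] i ⁻¹' sets i) := by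
      simp only [mem_iInter, mem_preimage]
      exact forall_congr' fun i => forall_congr' fun _ => hω i
    exact propext h2
  rw [measure_congr e1, h S hsets]
  refine Finset.prod_congr rfl fun i _ => ?_
  apply measure_congr
  filter_upwards [key] with ω hω
  have h2 : (ω ∈ ![X, Y, Z] i ⁻¹' sets i) ↔ (ω ∈ ![X', Y', Z'] i ⁻¹' sets i) := by
    simp only [mem_preimage]
    exact (hω i).symm
  exact propext h2

/-- the k = 1 hysteresis drag term is non-positive and O(α²):
for independent standard Gaussians X, Y, Z̃ and X̃₁ = αZ̃ + √(1-α²)Y,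
X̃₂ = αX̃₁ + √(1-α²)X, the integral E[X · 1{|X̃₂|<η, |X̃₁|<η, Z̃ ≥ η}] is ≤ 0
and bounded in absolute value by C(η) α². -/
theorem hysteresis_drag_k1_bound (η : ℝ) (hη : 0 < η) :
    ∃ C : ℝ, ∀ {Ω : Type} [MeasureSpace Ω] (μ : Measure Ω) [IsProbabilityMeasure μ]
      (X Y Z : Ω → ℝ),
      iIndepFun ![X, Y, Z] μ →
      Measure.map X μ = gaussianReal 0 1 →
      Measure.map Y μ = gaussianReal 0 1 →
      Measure.map Z μ = gaussianReal 0 1 →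
      ∀ α : ℝ, 0 ≤ α → α < 1 / 2 →
        (∫ ω in {ω | (-η < α * (α * Z ω + Real.sqrt (1 - α ^ 2) * Y ω) +
                        Real.sqrt (1 - α ^ 2) * X ω ∧
                      α * (α * Z ω + Real.sqrt (1 - α ^ 2) * Y ω) +
                        Real.sqrt (1 - α ^ 2) * X ω < η) ∧
                     (-η < α * Z ω + Real.sqrt (1 - α ^ 2) * Y ω ∧
                      α * Z ω + Real.sqrt (1 - α ^ 2) * Y ω < η) ∧
                     η ≤ Z ω}, X ω ∂μ) ≤ 0 ∧
        |∫ ω in {ω | (-η < α * (α * Z ω + Real.sqrt (1 - α ^ 2) * Y ω) +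
                        Real.sqrt (1 - α ^ 2) * X ω ∧
                      α * (α * Z ω + Real.sqrt (1 - α ^ 2) * Y ω) +
                        Real.sqrt (1 - α ^ 2) * X ω < η) ∧
                     (-η < α * Z ω + Real.sqrt (1 - α ^ 2) * Y ω ∧
                      α * Z ω + Real.sqrt (1 - α ^ 2) * Y ω < η) ∧
                     η ≤ Z ω}, X ω ∂μ| ≤ C * α ^ 2 := by
  refine ⟨16 * η^2 * ∫ z, max z 0 ∂(gaussianReal 0 1), ?_⟩
  intro Ω _ μ _ X Y Z hind hX hY hZ α hα0 hα
  have hprob : ∀ {W : Ω → ℝ}, Measure.map W μ = gaussianReal 0 1 → AEMeasurable W μ := by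
    intro W hW
    by_contra h
    rw [Measure.map_of_not_aemeasurable h] at hW
    have h1 : (gaussianReal (0:ℝ) 1) univ = 1 := measure_univ
    rw [← hW] at h1
    simp at h1
  have hXa := hprob hX
  have hYa := hprob hY
  have hZa := hprob hZ
  set X' := hXa.mk X with hX'def
  set Y' := hYa.mk Y with hY'def
  set Z' := hZa.mk Z with hZ'def
  have hXe : X =ᵐ[μ] X' := hXa.ae_eq_mk
  have hYe : Y =ᵐ[μ] Y' := hYa.ae_eq_mk
  have hZe : Z =ᵐ[μ] Z' := hZa.ae_eq_mk
  have hX'm : Measurable X' := hXa.measurable_mk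
  have hY'm : Measurable Y' := hYa.measurable_mk
  have hZ'm : Measurable Z' := hZa.measurable_mk
  have hX' : Measure.map X' μ = gaussianReal 0 1 := by rw [← Measure.map_congr hXe]; exact hX
  have hY' : Measure.map Y' μ = gaussianReal 0 1 := by rw [← Measure.map_congr hYe]; exact hY
  have hZ' : Measure.map Z' μ = gaussianReal 0 1 := by rw [← Measure.map_congr hZe]; exact hZ
  have hind' : iIndepFun ![X', Y', Z'] μ :=
    iIndepFun_congr3 hXe hYe hZe hind
  have hseteq : ({ω | (-η < α * (α * Z ω + Real.sqrt (1 - α ^ 2) * Y ω) +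
                        Real.sqrt (1 - α ^ 2) * X ω ∧
                      α * (α * Z ω + Real.sqrt (1 - α ^ 2) * Y ω) +
                        Real.sqrt (1 - α ^ 2) * X ω < η) ∧
                     (-η < α * Z ω + Real.sqrt (1 - α ^ 2) * Y ω ∧
                      α * Z ω + Real.sqrt (1 - α ^ 2) * Y ω < η) ∧
                     η ≤ Z ω} : Set Ω)
      =ᵐ[μ] ({ω | (-η < α * (α * Z' ω + Real.sqrt (1 - α ^ 2) * Y' ω) +
                        Real.sqrt (1 - α ^ 2) * X' ω ∧
                      α * (α * Z' ω + Real.sqrt (1 - α ^ 2) * Y' ω) +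
                        Real.sqrt (1 - α ^ 2) * X' ω < η) ∧
                     (-η < α * Z' ω + Real.sqrt (1 - α ^ 2) * Y' ω ∧
                      α * Z' ω + Real.sqrt (1 - α ^ 2) * Y' ω < η) ∧
                     η ≤ Z' ω} : Set Ω) := by
    filter_upwards [hXe, hYe, hZe] with ω h1 h2 h3
    have h4 : (ω ∈ ({ω | (-η < α * (α * Z ω + Real.sqrt (1 - α ^ 2) * Y ω) +
                        Real.sqrt (1 - α ^ 2) * X ω ∧
                      α * (α * Z ω + Real.sqrt (1 - α ^ 2) * Y ω) +
                        Real.sqrt (1 - α ^ 2) * X ω < η) ∧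
                     (-η < α * Z ω + Real.sqrt (1 - α ^ 2) * Y ω ∧
                      α * Z ω + Real.sqrt (1 - α ^ 2) * Y ω < η) ∧
                     η ≤ Z ω} : Set Ω))
        ↔ (ω ∈ ({ω | (-η < α * (α * Z' ω + Real.sqrt (1 - α ^ 2) * Y' ω) +
                        Real.sqrt (1 - α ^ 2) * X' ω ∧
                      α * (α * Z' ω + Real.sqrt (1 - α ^ 2) * Y' ω) +
                        Real.sqrt (1 - α ^ 2) * X' ω < η) ∧
                     (-η < α * Z' ω + Real.sqrt (1 - α ^ 2) * Y' ω ∧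
                      α * Z' ω + Real.sqrt (1 - α ^ 2) * Y' ω < η) ∧
                     η ≤ Z' ω} : Set Ω)) := by
      simp only [mem_setOf_eq, h1, h2, h3]
    exact propext h4
  have hint_eq : (∫ ω in {ω | (-η < α * (α * Z ω + Real.sqrt (1 - α ^ 2) * Y ω) +
                        Real.sqrt (1 - α ^ 2) * X ω ∧
                      α * (α * Z ω + Real.sqrt (1 - α ^ 2) * Y ω) +
                        Real.sqrt (1 - α ^ 2) * X ω < η) ∧
                     (-η < α * Z ω + Real.sqrt (1 - α ^ 2) * Y ω ∧
                      α * Z ω + Real.sqrt (1 - α ^ 2) * Y ω < η) ∧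
                     η ≤ Z ω}, X ω ∂μ)
      = ∫ ω in {ω | (-η < α * (α * Z' ω + Real.sqrt (1 - α ^ 2) * Y' ω) +
                        Real.sqrt (1 - α ^ 2) * X' ω ∧
                      α * (α * Z' ω + Real.sqrt (1 - α ^ 2) * Y' ω) +
                        Real.sqrt (1 - α ^ 2) * X' ω < η) ∧
                     (-η < α * Z' ω + Real.sqrt (1 - α ^ 2) * Y' ω ∧
                      α * Z' ω + Real.sqrt (1 - α ^ 2) * Y' ω < η) ∧
                     η ≤ Z' ω}, X' ω ∂μ := by
    rw [Measure.restrict_congr_set hseteq]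
    exact integral_congr_ae (ae_restrict_of_ae hXe)
  rw [hint_eq]
  have tr := transfer (η := η) (α := α) μ X' Y' Z' hX'm hY'm hZ'm hind' hX' hY' hZ'
  unfold sA at tr
  rw [tr]
  obtain ⟨hA, hB⟩ := gauss_side hη hα0 hα
  refine ⟨hA, ?_⟩
  rw [abs_of_nonpos hA]
  exact hB
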